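/- Let M ≥ 1, let ψ₁, …, ψ_M be unit vectors in ℂ², and let n₁, …, n_M be natural numbers. Suppose there exists a unit vector χ ∈ ℂ² with |⟨χ, ψ_j⟩|² ≥ 1/2 for every j (i.e., the Bloch vectors of the ψ_j lie in a common closed half sphere). Then there exists a unit vector φ ∈ ℂ² such that for every density matrix ρ on ℂ² one has ∏_{j=1}^M (ψ_j† ρ ψ_j)^{n_j} ≤ ∏_{j=1}^M |⟨φ, ψ_j⟩|^{2 n_j}; that is, the likelihood functional ρ ↦ ∏_j (ψ_j† ρ ψ_j)^{n_j} attains its maximum over density matrices at a pure state. -/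

import Mathlib

open scoped BigOperators ComplexOrder

/-- The standard Hermitian inner product on `ℂ^d`, conjugate-linear in the
first argument: `⟨φ, ψ⟩ = ∑ i, conj (φ i) * ψ i`. -/
noncomputable def inp {d : ℕ} (φ ψ : Fin d → ℂ) : ℂ :=
  ∑ i, (starRingEnd ℂ) (φ i) * ψ i

open scoped RealInnerProductSpace

/-- Bloch vector of a (unit) vector in `ℂ²`. -/
noncomputable def bv (ψ : Fin 2 → ℂ) : EuclideanSpace ℝ (Fin 3) :=
  (WithLp.equiv 2 (Fin 3 → ℝ)).symm
    ![2 * ((starRingEnd ℂ) (ψ 0) * ψ 1).re,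
      2 * ((starRingEnd ℂ) (ψ 0) * ψ 1).im,
      Complex.normSq (ψ 0) - Complex.normSq (ψ 1)]

/-- Bloch vector of a density matrix on `ℂ²`. -/
noncomputable def rv (ρ : Matrix (Fin 2) (Fin 2) ℂ) : EuclideanSpace ℝ (Fin 3) :=
  (WithLp.equiv 2 (Fin 3 → ℝ)).symm
    ![2 * (ρ 0 1).re, -(2 * (ρ 0 1).im), (ρ 0 0).re - (ρ 1 1).re]

lemma inner3 (x y : EuclideanSpace ℝ (Fin 3)) : ⟪x,y⟫ = x 0 * y 0 + x 1 * y 1 + x 2 * y 2 := by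
  simp [PiLp.inner_apply, Fin.sum_univ_three]
  ring

lemma unit_of_inp {ψ : Fin 2 → ℂ} (h : inp ψ ψ = 1) :
    Complex.normSq (ψ 0) + Complex.normSq (ψ 1) = 1 := by
  have := congrArg Complex.re h
  simp [inp, Fin.sum_univ_two, Complex.add_re, ← Complex.normSq_eq_conj_mul_self] at this
  simpa [Complex.normSq_eq_conj_mul_self] using this

lemma inp_of_unit {φ : Fin 2 → ℂ} (h : Complex.normSq (φ 0) + Complex.normSq (φ 1) = 1) :
    inp φ φ = 1 := by
  rw [inp, Fin.sum_univ_two, ← Complex.normSq_eq_conj_mul_self,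
    ← Complex.normSq_eq_conj_mul_self, ← Complex.ofReal_add, h, Complex.ofReal_one]

lemma pure_val {φ ψ : Fin 2 → ℂ} (hφ : Complex.normSq (φ 0) + Complex.normSq (φ 1) = 1)
    (hψ : Complex.normSq (ψ 0) + Complex.normSq (ψ 1) = 1) :
    ‖inp φ ψ‖ ^ 2 = (1 + ⟪bv φ, bv ψ⟫) / 2 := by
  rw [Complex.sq_norm, inner3]
  simp only [bv, WithLp.equiv_symm_apply, PiLp.toLp_apply, Matrix.cons_val_zero, Matrix.cons_val_one,
    Matrix.head_cons, Matrix.cons_val_two, Matrix.tail_cons, inp, Fin.sum_univ_two]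
  simp only [Complex.normSq_apply, Complex.normSq_add, Complex.add_re, Complex.add_im,
    Complex.mul_re, Complex.mul_im, Complex.conj_re, Complex.conj_im] at *
  ring_nf
  nlinarith [hφ, hψ]

lemma bv_unit {ψ : Fin 2 → ℂ} (h : Complex.normSq (ψ 0) + Complex.normSq (ψ 1) = 1) :
    ‖bv ψ‖ = 1 := by
  have h1 : ⟪bv ψ, bv ψ⟫ = 1 := by
    rw [inner3]
    simp only [bv, WithLp.equiv_symm_apply, PiLp.toLp_apply, Matrix.cons_val_zero, Matrix.cons_val_one,
      Matrix.head_cons, Matrix.cons_val_two, Matrix.tail_cons]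
    have hw : ((starRingEnd ℂ) (ψ 0) * ψ 1).re ^ 2 + ((starRingEnd ℂ) (ψ 0) * ψ 1).im ^ 2
        = Complex.normSq (ψ 0) * Complex.normSq (ψ 1) := by
      have : Complex.normSq ((starRingEnd ℂ) (ψ 0) * ψ 1)
          = Complex.normSq (ψ 0) * Complex.normSq (ψ 1) := by
        simp [Complex.normSq_mul]
      simpa [Complex.normSq_apply, sq] using this
    nlinarith [hw, h]
  rw [real_inner_self_eq_norm_sq] at h1
  nlinarith [norm_nonneg (bv ψ)]

lemma mixed_val {ρ : Matrix (Fin 2) (Fin 2) ℂ} (hP : ρ.PosSemidef) (htr : ρ.trace = 1)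
    {ψ : Fin 2 → ℂ} (hψ : Complex.normSq (ψ 0) + Complex.normSq (ψ 1) = 1) :
    (dotProduct (star ψ) (ρ.mulVec ψ)).re = (1 + ⟪rv ρ, bv ψ⟫) / 2 := by
  have h10 : ρ 1 0 = (starRingEnd ℂ) (ρ 0 1) := by
    have := hP.1.apply 1 0
    simpa [Matrix.conjTranspose_apply] using this.symm
  have h00 : (ρ 0 0).im = 0 := by
    have := hP.1.apply 0 0
    have h2 := congrArg Complex.im this
    simp at h2
    linarith [h2]
  have h11 : (ρ 1 1).im = 0 := by
    have := hP.1.apply 1 1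
    have h2 := congrArg Complex.im this
    simp at h2
    linarith [h2]
  have htr' : (ρ 0 0).re + (ρ 1 1).re = 1 := by
    have := congrArg Complex.re htr
    simpa [Matrix.trace_fin_two] using this
  rw [inner3]
  simp only [rv, bv, WithLp.equiv_symm_apply, PiLp.toLp_apply, Matrix.cons_val_zero, Matrix.cons_val_one,
    Matrix.head_cons, Matrix.cons_val_two, Matrix.tail_cons]
  simp only [dotProduct, Matrix.mulVec, Fin.sum_univ_two, Pi.star_apply, h10]
  simp only [Complex.normSq_apply, Complex.add_re, Complex.add_im, Complex.mul_re,
    Complex.mul_im, Complex.conj_re, Complex.conj_im, RCLike.star_def] at *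
  ring_nf
  nlinarith [hψ, htr', h00, h11]

lemma pure_exists (r : EuclideanSpace ℝ (Fin 3)) (hr : ‖r‖ = 1) :
    ∃ φ : Fin 2 → ℂ, Complex.normSq (φ 0) + Complex.normSq (φ 1) = 1 ∧ bv φ = r := by
  have hsum : r 0 ^ 2 + r 1 ^ 2 + r 2 ^ 2 = 1 := by
    have := real_inner_self_eq_norm_sq r
    rw [inner3, hr] at this
    nlinarith [this]
  by_cases hz : r 2 = -1
  · refine ⟨![0, 1], by simp, ?_⟩
    have hx : r 0 = 0 := by nlinarith
    have hy : r 1 = 0 := by nlinarith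
    ext i
    fin_cases i <;>
      simp [bv, WithLp.equiv_symm_apply, PiLp.toLp_apply, hx, hy, hz]
  · have hz1 : -1 ≤ r 2 := by nlinarith
    have ha : 0 < (1 + r 2) / 2 := by
      rcases lt_or_eq_of_le hz1 with h | h
      · linarith
      · exact absurd h.symm hz
    set a := (1 + r 2) / 2 with ha'
    set p := Real.sqrt a with hp'
    have hp : 0 < p := Real.sqrt_pos.mpr ha
    have hp2 : p ^ 2 = a := Real.sq_sqrt ha.le
    have hpc : (p : ℂ) ≠ 0 := by exact_mod_cast hp.ne'
    refine ⟨![(p : ℂ), ((r 0 : ℂ) + (r 1 : ℂ) * Complex.I) / (2 * p)], ?_, ?_⟩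
    · simp only [Matrix.cons_val_zero, Matrix.cons_val_one, Matrix.head_cons,
        Complex.normSq_div, Complex.normSq_add_mul_I, Complex.normSq_ofReal,
        Complex.normSq_mul]
      have : Complex.normSq 2 = 4 := by
        simp [Complex.normSq_apply]; norm_num
      rw [this]
      field_simp
      nlinarith [hsum, hp2]
    · have hw : (starRingEnd ℂ) (p : ℂ) * (((r 0 : ℂ) + (r 1 : ℂ) * Complex.I) / (2 * p))
          = ((r 0 : ℂ) + (r 1 : ℂ) * Complex.I) / 2 := by
        rw [Complex.conj_ofReal]
        field_simp
      ext i
      fin_cases i <;>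
        simp only [bv, WithLp.equiv_symm_apply, PiLp.toLp_apply, Matrix.cons_val_zero, Matrix.cons_val_one,
          Matrix.head_cons, Matrix.cons_val_two, Matrix.tail_cons, hw]
      · show 2 * (((r 0 : ℂ) + (r 1 : ℂ) * Complex.I) / 2).re = r 0
        simp [Complex.div_re]
        ring
      · show 2 * (((r 0 : ℂ) + (r 1 : ℂ) * Complex.I) / 2).im = r 1
        simp [Complex.div_im]
        ring
      · show Complex.normSq (p : ℂ) -
            Complex.normSq (((r 0 : ℂ) + (r 1 : ℂ) * Complex.I) / (2 * (p:ℂ))) = r 2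
        simp only [Complex.normSq_div, Complex.normSq_add_mul_I, Complex.normSq_ofReal,
          Complex.normSq_mul]
        have h4 : Complex.normSq 2 = 4 := by
          simp [Complex.normSq_apply]; norm_num
        rw [h4]
        field_simp
        nlinarith [hsum, hp2]

lemma rv_le {ρ : Matrix (Fin 2) (Fin 2) ℂ} (hP : ρ.PosSemidef) (htr : ρ.trace = 1) :
    ‖rv ρ‖ ≤ 1 := by
  by_contra hlt
  push_neg at hlt
  set v : EuclideanSpace ℝ (Fin 3) := rv ρ with hv
  have hv0 : v ≠ 0 := by
    intro h
    rw [h] at hlt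
    simp at hlt
    linarith
  set u : EuclideanSpace ℝ (Fin 3) := (-(‖v‖⁻¹)) • v with hu
  have hvn : ‖v‖ ≠ 0 := norm_ne_zero_iff.mpr hv0
  have hun : ‖u‖ = 1 := by
    rw [hu, norm_smul]
    simp only [norm_neg, norm_inv, norm_norm]
    field_simp
  obtain ⟨φ, hφn, hφv⟩ := pure_exists u hun
  have hval := mixed_val hP htr hφn
  rw [hφv] at hval
  have hin : ⟪v, u⟫ = -‖v‖ := by
    rw [hu, real_inner_smul_right, real_inner_self_eq_norm_sq]
    field_simp
  have hnonneg : (0:ℝ) ≤ (dotProduct (star φ) (ρ.mulVec φ)).re :=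
    hP.re_dotProduct_nonneg φ
  rw [hval, hin] at hnonneg
  linarith

theorem stmt4 (M : ℕ) (hM : 1 ≤ M)
    (ψ : Fin M → (Fin 2 → ℂ)) (hψ : ∀ j, inp (ψ j) (ψ j) = 1)
    (n : Fin M → ℕ)
    (hhalf : ∃ χ : Fin 2 → ℂ, inp χ χ = 1 ∧
      ∀ j, (1 : ℝ) / 2 ≤ ‖inp χ (ψ j)‖ ^ 2) :
    ∃ φ : Fin 2 → ℂ, inp φ φ = 1 ∧
      ∀ ρ : Matrix (Fin 2) (Fin 2) ℂ, ρ.PosSemidef → ρ.trace = 1 →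
        ∏ j, (dotProduct (star (ψ j)) (ρ.mulVec (ψ j))).re ^ (n j)
          ≤ ∏ j, ‖inp φ (ψ j)‖ ^ (2 * n j) := by
  obtain ⟨χ, hχ1, hχ2⟩ := hhalf
  have hχn := unit_of_inp hχ1
  have hψn : ∀ j, Complex.normSq (ψ j 0) + Complex.normSq (ψ j 1) = 1 :=
    fun j => unit_of_inp (hψ j)
  set s : Fin M → EuclideanSpace ℝ (Fin 3) := fun j => bv (ψ j) with hs
  have hsn : ∀ j, ‖s j‖ = 1 := fun j => bv_unit (hψn j)
  set c : EuclideanSpace ℝ (Fin 3) := bv χ with hc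
  have hcn : ‖c‖ = 1 := bv_unit hχn
  have hcs : ∀ j, 0 ≤ ⟪c, s j⟫ := by
    intro j
    have h := hχ2 j
    rw [pure_val hχn (hψn j)] at h
    linarith
  set F : EuclideanSpace ℝ (Fin 3) → ℝ :=
    fun r => ∏ j, ((1 + ⟪r, s j⟫) / 2) ^ (n j) with hF
  have hFcont : Continuous F := by
    apply continuous_finset_prod
    intro j _
    exact ((continuous_const.add (continuous_id.inner continuous_const)).div_const 2).pow _
  obtain ⟨r₀, hr₀mem, hmax⟩ :=
    (isCompact_closedBall (0 : EuclideanSpace ℝ (Fin 3)) 1).exists_isMaxOn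
      ⟨0, by simp⟩ hFcont.continuousOn
  have hr₀ : ‖r₀‖ ≤ 1 := by simpa [mem_closedBall_zero_iff] using hr₀mem
  set P : ℝ := ⟪r₀, c⟫ with hPdef
  set t : ℝ := -P + Real.sqrt (P ^ 2 + 1 - ‖r₀‖ ^ 2) with ht
  have harg : 0 ≤ P ^ 2 + 1 - ‖r₀‖ ^ 2 := by nlinarith [hr₀, norm_nonneg r₀]
  have hsq : (t + P) ^ 2 = P ^ 2 + 1 - ‖r₀‖ ^ 2 := by
    have h1 : t + P = Real.sqrt (P ^ 2 + 1 - ‖r₀‖ ^ 2) := by rw [ht]; ring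
    rw [h1, Real.sq_sqrt harg]
  have ht0 : 0 ≤ t := by
    have h1 : |P| ≤ Real.sqrt (P ^ 2 + 1 - ‖r₀‖ ^ 2) := by
      rw [← Real.sqrt_sq_eq_abs]
      exact Real.sqrt_le_sqrt (by nlinarith [hr₀, norm_nonneg r₀])
    have := abs_nonneg P
    rw [ht]
    have := le_abs_self P
    linarith
  set r₁ : EuclideanSpace ℝ (Fin 3) := r₀ + t • c with hr₁def
  have hr₁inner : ⟪r₁, r₁⟫ = 1 := by
    rw [hr₁def, real_inner_add_add_self, real_inner_smul_right,
      real_inner_smul_left, real_inner_smul_right, real_inner_self_eq_norm_sq,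
      real_inner_self_eq_norm_sq, hcn]
    rw [← hPdef]
    nlinarith [hsq]
  have hr₁ : ‖r₁‖ = 1 := by
    have h1 : ‖r₁‖ ^ 2 = 1 := by rw [← real_inner_self_eq_norm_sq]; exact hr₁inner
    nlinarith [norm_nonneg r₁]
  obtain ⟨φ, hφn, hφbv⟩ := pure_exists r₁ hr₁
  refine ⟨φ, inp_of_unit hφn, ?_⟩
  intro ρ hP hTr
  have hrvle := rv_le hP hTr
  have step1 : ∏ j, (dotProduct (star (ψ j)) (ρ.mulVec (ψ j))).re ^ (n j)
      = F (rv ρ) := by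
    apply Finset.prod_congr rfl
    intro j _
    rw [mixed_val hP hTr (hψn j)]
  have step2 : F (rv ρ) ≤ F r₀ :=
    hmax (by simpa [mem_closedBall_zero_iff] using hrvle)
  have step3 : F r₀ ≤ F r₁ := by
    apply Finset.prod_le_prod
    · intro j _
      apply pow_nonneg
      have := abs_real_inner_le_norm r₀ (s j)
      rw [hsn j, mul_one] at this
      have := neg_abs_le ⟪r₀, s j⟫
      linarith [hr₀]
    · intro j _
      have h0 : (0:ℝ) ≤ (1 + ⟪r₀, s j⟫) / 2 := by
        have h1 := abs_real_inner_le_norm r₀ (s j)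
        rw [hsn j, mul_one] at h1
        have := neg_abs_le ⟪r₀, s j⟫
        linarith [hr₀]
      have hle : (1 + ⟪r₀, s j⟫) / 2 ≤ (1 + ⟪r₁, s j⟫) / 2 := by
        have h2 : ⟪r₁, s j⟫ = ⟪r₀, s j⟫ + t * ⟪c, s j⟫ := by
          rw [hr₁def, inner_add_left, real_inner_smul_left]
        have ha : ⟪r₀, s j⟫ ≤ ⟪r₁, s j⟫ := by
          rw [h2]
          exact le_add_of_nonneg_right (mul_nonneg ht0 (hcs j))
        linarith
      exact pow_le_pow_left₀ h0 hle _
  have step4 : F r₁ = ∏ j, ‖inp φ (ψ j)‖ ^ (2 * n j) := by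
    apply Finset.prod_congr rfl
    intro j _
    rw [pow_mul, pure_val hφn (hψn j), hφbv]
  calc ∏ j, (dotProduct (star (ψ j)) (ρ.mulVec (ψ j))).re ^ (n j)
      = F (rv ρ) := step1
    _ ≤ F r₀ := step2
    _ ≤ F r₁ := step3
    _ = ∏ j, ‖inp φ (ψ j)‖ ^ (2 * n j) := step4
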